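/- arXiv:1112.1935 — 8 statements merged into one kernel-verified Lean document; each statement's English description precedes it below -/
import Mathlib

section
/- Let X be a compact metric space and let 𝒞 be a subset of NonemptyCompacts X that is closed with respect to the Hausdorff metric. Then 𝒞, equipped with the subspace topology of the Thurston topology on NonemptyCompacts X, is a compact topological space. -/
open Topology TopologicalSpace

/-- The Thurston topology on the space of nonempty compact subsets of `X`:
the topology generated by the subbasis consisting of the sets
`U_V = {K : nonempty compact | K ∩ V ≠ ∅}` for `V` open in `X`. -/
def thurstonTopNC (X : Type*) [MetricSpace X] :
    TopologicalSpace (NonemptyCompacts X) :=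
  TopologicalSpace.generateFrom
    {U | ∃ V : Set X, IsOpen V ∧ U = {K : NonemptyCompacts X | ((K : Set X) ∩ V).Nonempty}}

/-- The Hausdorff-metric topology is finer than the Thurston topology. -/
lemma metric_le_thurstonTopNC (X : Type*) [MetricSpace X] :
    (inferInstance : TopologicalSpace (NonemptyCompacts X)) ≤ thurstonTopNC X := by
  apply le_generateFrom
  rintro U ⟨V, hV, rfl⟩
  rw [Metric.isOpen_iff]
  rintro K ⟨x, hxK, hxV⟩
  obtain ⟨ε, εpos, hball⟩ := Metric.isOpen_iff.1 hV x hxV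
  refine ⟨ε, εpos, fun K' hK' => ?_⟩
  rw [Metric.mem_ball, Metric.NonemptyCompacts.dist_eq] at hK'
  have hne : EMetric.hausdorffEdist (K' : Set X) (K : Set X) ≠ ⊤ :=
    Metric.hausdorffEdist_ne_top_of_nonempty_of_bounded K'.nonempty K.nonempty
      K'.isCompact.isBounded K.isCompact.isBounded
  obtain ⟨y, hyK', hy⟩ := Metric.exists_dist_lt_of_hausdorffDist_lt' hxK hK' hne
  exact ⟨y, hyK', hball (by rwa [Metric.mem_ball])⟩

/-- If `X` is a compact metric space and `𝒞` is a subset of `NonemptyCompacts X` that is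
closed for the Hausdorff metric, then `𝒞` with the subspace topology of the Thurston
topology is a compact topological space. -/
theorem thurston_compact_of_closed {X : Type*} [MetricSpace X] [CompactSpace X]
    (𝒞 : Set (NonemptyCompacts X)) (h𝒞 : IsClosed 𝒞) :
    @CompactSpace 𝒞 (TopologicalSpace.induced (Subtype.val) (thurstonTopNC X)) := by
  have hcomp : IsCompact 𝒞 := h𝒞.isCompact
  have hcont : @Continuous _ _ _ (thurstonTopNC X) (id : NonemptyCompacts X → NonemptyCompacts X) :=
    continuous_id_of_le (metric_le_thurstonTopNC X)
  have hcomp' : @IsCompact _ (thurstonTopNC X) 𝒞 := by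
    simpa using @IsCompact.image _ _ _ (thurstonTopNC X) 𝒞 id hcomp hcont
  exact (@isCompact_iff_compactSpace _ (thurstonTopNC X) 𝒞).mp hcomp'
end

section
/- Let X be a topological space and 𝒞 a set of subsets of X equipped with the Thurston topology. For every A ∈ 𝒞, the set 𝒰(A) = {B ∈ 𝒞 : for every open V ⊆ X with V ∩ A ≠ ∅, also V ∩ B ≠ ∅} equals the intersection of all Thurston-open subsets of 𝒞 that contain A. -/
open Topology

/-- The Thurston topology on a set `𝒞` of subsets of a topological space `X`:
the topology generated by the subbasis consisting of the sets
`U_V = {A ∈ 𝒞 : A ∩ V ≠ ∅}` for `V` open in `X`. -/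
def thurstonTop {X : Type*} [TopologicalSpace X] (𝒞 : Set (Set X)) :
    TopologicalSpace 𝒞 :=
  TopologicalSpace.generateFrom
    {U | ∃ V : Set X, IsOpen V ∧ U = {A : 𝒞 | ((A : Set X) ∩ V).Nonempty}}

/-- For `A ∈ 𝒞`, the set `𝒰(A)` of elements `B ∈ 𝒞` that meet every open set
meeting `A`. -/
def thurstonU {X : Type*} [TopologicalSpace X] (𝒞 : Set (Set X)) (A : 𝒞) : Set 𝒞 :=
  {B : 𝒞 | ∀ V : Set X, IsOpen V → (V ∩ (A : Set X)).Nonempty → (V ∩ (B : Set X)).Nonempty}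

/-- `𝒰(A)` equals the intersection of all Thurston-open subsets of `𝒞` containing `A`. -/
theorem thurstonU_eq_sInter_opens {X : Type*} [TopologicalSpace X]
    (𝒞 : Set (Set X)) (A : 𝒞) :
    thurstonU 𝒞 A = ⋂₀ {U : Set 𝒞 | IsOpen[thurstonTop 𝒞] U ∧ A ∈ U} := by
  ext B
  constructor
  · rintro hB U ⟨hUopen, hAU⟩
    induction hUopen with
    | basic s hs =>
      obtain ⟨V, hV, rfl⟩ := hs
      obtain ⟨x, hxA, hxV⟩ := hAU
      obtain ⟨y, hyV, hyB⟩ := hB V hV ⟨x, hxV, hxA⟩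
      exact ⟨y, hyB, hyV⟩
    | univ => trivial
    | inter s t _ _ ihs iht => exact ⟨ihs hAU.1, iht hAU.2⟩
    | sUnion S _ ih =>
      obtain ⟨t, htS, hAt⟩ := hAU
      exact ⟨t, htS, ih t htS hAt⟩
  · intro hB V hV hVA
    have : B ∈ {C : 𝒞 | ((C : Set X) ∩ V).Nonempty} := by
      apply hB
      refine ⟨TopologicalSpace.GenerateOpen.basic _ ⟨V, hV, rfl⟩, ?_⟩
      obtain ⟨x, hxV, hxA⟩ := hVA
      exact ⟨x, hxA, hxV⟩
    obtain ⟨x, hxB, hxV⟩ := this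
    exact ⟨x, hxV, hxB⟩
end

section
/- Let X be a topological space and 𝒞 a set of closed subsets of X equipped with the Thurston topology. Let f : 𝒞 → 𝒞 be a homeomorphism with respect to the Thurston topology. Then f is monotone for inclusion: for all A, B ∈ 𝒞, A ⊆ B implies f(A) ⊆ f(B). -/
open Topology

lemma thurston_subset_iff_mem_closure {X : Type*} [TopologicalSpace X]
    (𝒞 : Set (Set X)) (hcl : ∀ C ∈ 𝒞, IsClosed C) (A B : 𝒞) :
    (A : Set X) ⊆ (B : Set X) ↔ A ∈ @closure 𝒞 (thurstonTop 𝒞) {B} := by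
  letI := thurstonTop 𝒞
  constructor
  · intro hAB
    rw [mem_closure_iff]
    intro U hU hA
    suffices h : B ∈ U by exact ⟨B, h, rfl⟩
    have key : ∀ U, TopologicalSpace.GenerateOpen
        {U | ∃ V : Set X, IsOpen V ∧ U = {A : 𝒞 | ((A : Set X) ∩ V).Nonempty}} U →
        A ∈ U → B ∈ U := by
      intro U hU
      induction hU with
      | basic s hs =>
        intro hA
        obtain ⟨V, hV, rfl⟩ := hs
        obtain ⟨x, hxA, hxV⟩ := hA
        exact ⟨x, hAB hxA, hxV⟩
      | univ => intro _; trivial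
      | inter s t _ _ ihs iht => intro hA; exact ⟨ihs hA.1, iht hA.2⟩
      | sUnion S _ ih =>
        rintro ⟨s, hs, hA⟩
        exact ⟨s, hs, ih s hs hA⟩
    exact key U hU hA
  · intro h
    by_contra hns
    obtain ⟨x, hxA, hxB⟩ := Set.not_subset.mp hns
    have hV : IsOpen ((B : Set X)ᶜ) := (hcl B B.2).isOpen_compl
    have hUopen : IsOpen {A : 𝒞 | ((A : Set X) ∩ (B : Set X)ᶜ).Nonempty} :=
      TopologicalSpace.GenerateOpen.basic _ ⟨_, hV, rfl⟩
    rw [mem_closure_iff] at h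
    obtain ⟨C, hC, hCB⟩ := h _ hUopen ⟨x, hxA, hxB⟩
    rw [Set.mem_singleton_iff] at hCB
    subst hCB
    obtain ⟨y, hy1, hy2⟩ := hC
    exact hy2 hy1

/-- A homeomorphism of a set `𝒞` of closed subsets of `X` with respect to the Thurston
topology is monotone for inclusion: `A ⊆ B` implies `f(A) ⊆ f(B)`. -/
theorem homeomorph_monotone {X : Type*} [TopologicalSpace X]
    (𝒞 : Set (Set X)) (hcl : ∀ C ∈ 𝒞, IsClosed C)
    (f : @Homeomorph 𝒞 𝒞 (thurstonTop 𝒞) (thurstonTop 𝒞)) :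
    ∀ A B : 𝒞, (A : Set X) ⊆ (B : Set X) → (f A : Set X) ⊆ (f B : Set X) := by
  letI := thurstonTop 𝒞
  intro A B hAB
  rw [thurston_subset_iff_mem_closure 𝒞 hcl] at hAB ⊢
  have := f.image_closure {B}
  rw [Set.image_singleton] at this
  rw [← this]
  exact ⟨A, hAB, rfl⟩
end

section
/- Let X be a topological space and 𝒞 a set of closed subsets of X equipped with the Thurston topology. Let f : 𝒞 → 𝒞 be a homeomorphism with respect to the Thurston topology. Then f preserves strict inclusion in both directions: for all A, B ∈ 𝒞, A ⊊ B if and only if f(A) ⊊ f(B); in particular f is an order isomorphism of (𝒞, ⊆). -/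
open Topology

lemma thurston_subset_iff {X : Type*} [TopologicalSpace X]
    (𝒞 : Set (Set X)) (hcl : ∀ C ∈ 𝒞, IsClosed C) (A B : 𝒞) :
    (A : Set X) ⊆ (B : Set X) ↔
      ∀ U : Set 𝒞, (thurstonTop 𝒞).IsOpen U → A ∈ U → B ∈ U := by
  constructor
  · intro hAB U hU
    induction hU with
    | basic s hs =>
      obtain ⟨V, hV, rfl⟩ := hs
      rintro ⟨x, hxA, hxV⟩
      exact ⟨x, hAB hxA, hxV⟩
    | univ => exact fun _ => trivial
    | inter s t _ _ ihs iht => exact fun h => ⟨ihs h.1, iht h.2⟩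
    | sUnion S _ ih => rintro ⟨s, hs, hAs⟩; exact ⟨s, hs, ih s hs hAs⟩
  · intro h x hxA
    by_contra hxB
    have hBcl := hcl B B.2
    have hU : (thurstonTop 𝒞).IsOpen {C : 𝒞 | ((C : Set X) ∩ (B : Set X)ᶜ).Nonempty} :=
      TopologicalSpace.GenerateOpen.basic _ ⟨(B : Set X)ᶜ, hBcl.isOpen_compl, rfl⟩
    obtain ⟨y, hyB, hyBc⟩ := h _ hU ⟨x, hxA, hxB⟩
    exact hyBc hyB

/-- A homeomorphism of a set `𝒞` of closed subsets of `X` with respect to the Thurston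
topology preserves inclusion and strict inclusion in both directions; in particular it
is an order isomorphism of `(𝒞, ⊆)`. -/
theorem homeomorph_orderIso {X : Type*} [TopologicalSpace X]
    (𝒞 : Set (Set X)) (hcl : ∀ C ∈ 𝒞, IsClosed C)
    (f : @Homeomorph 𝒞 𝒞 (thurstonTop 𝒞) (thurstonTop 𝒞)) :
    ∀ A B : 𝒞, ((A : Set X) ⊆ (B : Set X) ↔ (f A : Set X) ⊆ (f B : Set X)) ∧
      ((A : Set X) ⊂ (B : Set X) ↔ (f A : Set X) ⊂ (f B : Set X)) := by
  letI : TopologicalSpace 𝒞 := thurstonTop 𝒞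
  have keyg : ∀ g : 𝒞 → 𝒞, Continuous g → ∀ A B : 𝒞,
      (A : Set X) ⊆ (B : Set X) → (g A : Set X) ⊆ (g B : Set X) := by
    intro g hg A B hAB
    rw [thurston_subset_iff 𝒞 hcl] at hAB ⊢
    intro U hU hfAU
    have hU' : IsOpen U := hU
    exact hAB _ (hU'.preimage hg) hfAU
  have key : ∀ A B : 𝒞, (A : Set X) ⊆ (B : Set X) → (f A : Set X) ⊆ (f B : Set X) :=
    keyg f f.continuous
  have key' : ∀ A B : 𝒞, (f A : Set X) ⊆ (f B : Set X) → (A : Set X) ⊆ (B : Set X) := by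
    intro A B h
    have := keyg f.symm f.symm.continuous (f A) (f B) h
    simpa using this
  have main : ∀ A B : 𝒞, (A : Set X) ⊆ (B : Set X) ↔ (f A : Set X) ⊆ (f B : Set X) :=
    fun A B => ⟨key A B, key' A B⟩
  intro A B
  refine ⟨main A B, ?_⟩
  rw [Set.ssubset_def, Set.ssubset_def, main A B, main B A]
end

section
/- Let X be a topological space and 𝒞 a set of closed subsets of X equipped with the Thurston topology. Let f : 𝒞 → 𝒞 be a homeomorphism with respect to the Thurston topology. If A ∈ 𝒞 is maximal for inclusion in 𝒞 (i.e. there is no C ∈ 𝒞 with A ⊊ C), then f(A) is maximal for inclusion in 𝒞. -/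
open Topology

lemma thurston_mem_closure_singleton {X : Type*} [TopologicalSpace X]
    (𝒞 : Set (Set X)) (A B : 𝒞) (hA : IsClosed (A : Set X)) :
    B ∈ @closure 𝒞 (thurstonTop 𝒞) {A} ↔ (B : Set X) ⊆ (A : Set X) := by
  letI : TopologicalSpace 𝒞 := thurstonTop 𝒞
  rw [mem_closure_iff]
  constructor
  · intro h x hxB
    by_contra hxA
    have hopen : IsOpen ({C : 𝒞 | ((C : Set X) ∩ (A : Set X)ᶜ).Nonempty}) :=
      TopologicalSpace.GenerateOpen.basic _ ⟨(A : Set X)ᶜ, hA.isOpen_compl, rfl⟩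
    have hB : B ∈ {C : 𝒞 | ((C : Set X) ∩ (A : Set X)ᶜ).Nonempty} := ⟨x, hxB, hxA⟩
    obtain ⟨C, hC1, hC2⟩ := h _ hopen hB
    rw [Set.mem_singleton_iff] at hC2
    subst hC2
    obtain ⟨y, hy1, hy2⟩ := hC1
    exact hy2 hy1
  · intro hBA o ho hBo
    refine ⟨A, ?_, rfl⟩
    induction ho with
    | basic u hu =>
      obtain ⟨V, hV, rfl⟩ := hu
      obtain ⟨x, hx1, hx2⟩ := hBo
      exact ⟨x, hBA hx1, hx2⟩
    | univ => trivial
    | inter u v hu hv ihu ihv => exact ⟨ihu hBo.1, ihv hBo.2⟩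
    | sUnion S hS ih =>
      obtain ⟨t, ht, hBt⟩ := hBo
      exact ⟨t, ht, ih t ht hBt⟩

/-- A homeomorphism of a set `𝒞` of closed subsets of `X` with respect to the Thurston
topology sends elements that are maximal for inclusion to elements that are maximal
for inclusion. -/
theorem homeomorph_maximal {X : Type*} [TopologicalSpace X]
    (𝒞 : Set (Set X)) (hcl : ∀ C ∈ 𝒞, IsClosed C)
    (f : @Homeomorph 𝒞 𝒞 (thurstonTop 𝒞) (thurstonTop 𝒞))
    (A : 𝒞) (hA : ¬ ∃ C : 𝒞, (A : Set X) ⊂ (C : Set X)) :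
    ¬ ∃ C : 𝒞, (f A : Set X) ⊂ (C : Set X) := by
  letI : TopologicalSpace 𝒞 := thurstonTop 𝒞
  rintro ⟨C, hsub, hne⟩
  set D := f.symm C with hD
  have hfD : f D = C := f.apply_symm_apply C
  -- f A ∈ closure {C}
  have h1 : f A ∈ closure ({C} : Set 𝒞) :=
    (thurston_mem_closure_singleton 𝒞 C (f A) (hcl _ C.2)).2 hsub
  -- closure {C} = f '' closure {D}
  have h2 : f A ∈ f '' closure ({D} : Set 𝒞) := by
    rw [f.image_closure, Set.image_singleton, hfD]
    exact h1
  have h3 : A ∈ closure ({D} : Set 𝒞) := by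
    obtain ⟨E, hE, hEeq⟩ := h2
    rwa [f.injective hEeq] at hE
  have h4 : (A : Set X) ⊆ (D : Set X) :=
    (thurston_mem_closure_singleton 𝒞 D A (hcl _ D.2)).1 h3
  have h5 : (A : Set X) = (D : Set X) := by
    by_contra hAD
    exact hA ⟨D, h4.ssubset_of_ne hAD⟩
  have h6 : A = D := Subtype.coe_injective h5
  apply hne
  rw [h6, hfD]
end

section
/- Let X be a topological space and 𝒞 a set of closed subsets of X equipped with the Thurston topology. Let f : 𝒞 → 𝒞 be a homeomorphism with respect to the Thurston topology. If A ∈ 𝒞 is minimal for inclusion in 𝒞 (i.e. there is no C ∈ 𝒞 with C ⊊ A), then f(A) is minimal for inclusion in 𝒞. -/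
open Topology

/-- If `C ⊆ A` then every Thurston-open set containing `C` contains `A`. -/
lemma thurston_open_mono {X : Type*} [TopologicalSpace X] {𝒞 : Set (Set X)}
    {C A : 𝒞} (hCA : (C : Set X) ⊆ (A : Set X)) {U : Set 𝒞}
    (hU : IsOpen[thurstonTop 𝒞] U) (hC : C ∈ U) : A ∈ U := by
  induction hU with
  | basic s hs =>
      obtain ⟨V, -, rfl⟩ := hs
      exact (hC.mono (Set.inter_subset_inter_left V hCA))
  | univ => trivial
  | inter s t _ _ ihs iht => exact ⟨ihs hC.1, iht hC.2⟩
  | sUnion S _ ih =>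
      obtain ⟨s, hs, hCs⟩ := hC
      exact ⟨s, hs, ih s hs hCs⟩

/-- A Thurston-continuous map between sets of closed subsets is monotone for inclusion. -/
lemma thurston_continuous_mono {X : Type*} [TopologicalSpace X] {𝒞 : Set (Set X)}
    (hcl : ∀ C ∈ 𝒞, IsClosed C) {g : 𝒞 → 𝒞}
    (hg : Continuous[thurstonTop 𝒞, thurstonTop 𝒞] g)
    {C A : 𝒞} (hCA : (C : Set X) ⊆ (A : Set X)) :
    (g C : Set X) ⊆ (g A : Set X) := by
  -- first: for every open V meeting g C, V meets g A
  have key : ∀ V : Set X, IsOpen V → ((g C : Set X) ∩ V).Nonempty →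
      ((g A : Set X) ∩ V).Nonempty := by
    intro V hV hne
    have hsub : IsOpen[thurstonTop 𝒞] {B : 𝒞 | ((B : Set X) ∩ V).Nonempty} :=
      TopologicalSpace.GenerateOpen.basic _ ⟨V, hV, rfl⟩
    have hpre : IsOpen[thurstonTop 𝒞] (g ⁻¹' {B : 𝒞 | ((B : Set X) ∩ V).Nonempty}) := by
      exact @Continuous.isOpen_preimage _ _ (thurstonTop 𝒞) (thurstonTop 𝒞) g hg _ hsub
    exact thurston_open_mono hCA hpre hne
  intro x hx
  by_contra hxA
  have hne : ((g C : Set X) ∩ (g A : Set X)ᶜ).Nonempty := ⟨x, hx, hxA⟩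
  obtain ⟨y, hy1, hy2⟩ := key _ (hcl _ (g A).2).isOpen_compl hne
  exact hy2 hy1

/-- A homeomorphism of a set `𝒞` of closed subsets of `X` with respect to the Thurston
topology sends elements that are minimal for inclusion to elements that are minimal
for inclusion. -/
theorem homeomorph_minimal {X : Type*} [TopologicalSpace X]
    (𝒞 : Set (Set X)) (hcl : ∀ C ∈ 𝒞, IsClosed C)
    (f : @Homeomorph 𝒞 𝒞 (thurstonTop 𝒞) (thurstonTop 𝒞))
    (A : 𝒞) (hA : ¬ ∃ C : 𝒞, (C : Set X) ⊂ (A : Set X)) :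
    ¬ ∃ C : 𝒞, (C : Set X) ⊂ (f A : Set X) := by
  letI : TopologicalSpace 𝒞 := thurstonTop 𝒞
  rintro ⟨D, hD⟩
  apply hA
  refine ⟨f.symm D, ?_, ?_⟩
  · have := thurston_continuous_mono hcl f.symm.continuous (C := D) (A := f A) hD.1
    simpa using this
  · intro hle
    have h2 : (A : Set X) ⊆ (f.symm D : Set X) := hle
    have h3 : (f A : Set X) ⊆ (f (f.symm D) : Set X) :=
      thurston_continuous_mono hcl f.continuous h2
    rw [f.apply_symm_apply] at h3
    exact hD.2 h3
end

section
/- Let X be a topological space and 𝒞 a set of closed subsets of X equipped with the Thurston topology, and let f : 𝒞 → 𝒞 be a homeomorphism with respect to the Thurston topology. For A ∈ 𝒞 define length(A) ∈ ℕ∞ as the supremum of all n for which there exists a chain A = A₀ ⊋ A₁ ⊋ ⋯ ⊋ A_n with every A_i ∈ 𝒞. Then for every A ∈ 𝒞, the image under f of any such chain of length n below A is a chain of length n below f(A), and length(A) = length(f(A)). -/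
open Topology

/-- A chain of length `n` below `A` in `𝒞`: a sequence
`A = A₀ ⊋ A₁ ⊋ ⋯ ⊋ A_n` of elements of `𝒞`. -/
def IsChainBelow {X : Type*} [TopologicalSpace X] (𝒞 : Set (Set X)) (A : 𝒞)
    (n : ℕ) (c : Fin (n + 1) → 𝒞) : Prop :=
  c 0 = A ∧ ∀ i : Fin n, (c i.succ : Set X) ⊂ (c i.castSucc : Set X)

/-- The length of `A ∈ 𝒞`: the supremum in `ℕ∞` of the lengths of chains
`A = A₀ ⊋ A₁ ⊋ ⋯ ⊋ A_n` of elements of `𝒞`. -/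
noncomputable def chainLength {X : Type*} [TopologicalSpace X] (𝒞 : Set (Set X))
    (A : 𝒞) : ℕ∞ :=
  ⨆ n ∈ {n : ℕ | ∃ c : Fin (n + 1) → 𝒞, IsChainBelow 𝒞 A n c}, (n : ℕ∞)

lemma subset_iff_specializes {X : Type*} [TopologicalSpace X] (𝒞 : Set (Set X))
    (hcl : ∀ C ∈ 𝒞, IsClosed C) (A B : 𝒞) :
    (A : Set X) ⊆ (B : Set X) ↔ @Specializes 𝒞 (thurstonTop 𝒞) B A := by
  letI := thurstonTop 𝒞
  rw [specializes_iff_forall_open]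
  constructor
  · intro hAB s hs
    have hs' : TopologicalSpace.GenerateOpen
        {U | ∃ V : Set X, IsOpen V ∧ U = {A : 𝒞 | ((A : Set X) ∩ V).Nonempty}} s := hs
    clear hs
    induction hs' with
    | basic u hu =>
      obtain ⟨V, hV, rfl⟩ := hu
      rintro ⟨x, hxA, hxV⟩
      exact ⟨x, hAB hxA, hxV⟩
    | univ => intro; trivial
    | inter u v hu hv ihu ihv => exact fun h => ⟨ihu h.1, ihv h.2⟩
    | sUnion S hS ih =>
      rintro ⟨t, htS, hAt⟩
      exact ⟨t, htS, ih t htS hAt⟩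
  · intro h
    by_contra hAB
    obtain ⟨x, hxA, hxB⟩ := Set.not_subset.mp hAB
    have hV : IsOpen ((B : Set X)ᶜ) := (hcl B B.2).isOpen_compl
    have hopen : IsOpen {A : 𝒞 | ((A : Set X) ∩ (B : Set X)ᶜ).Nonempty} :=
      TopologicalSpace.isOpen_generateFrom_of_mem ⟨_, hV, rfl⟩
    obtain ⟨y, hy1, hy2⟩ := h _ hopen ⟨x, hxA, hxB⟩
    exact hy2 hy1

lemma ssubset_map {X : Type*} [TopologicalSpace X] (𝒞 : Set (Set X))
    (hcl : ∀ C ∈ 𝒞, IsClosed C)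
    (f : @Homeomorph 𝒞 𝒞 (thurstonTop 𝒞) (thurstonTop 𝒞)) (A B : 𝒞)
    (h : (A : Set X) ⊂ (B : Set X)) : (f A : Set X) ⊂ (f B : Set X) := by
  letI := thurstonTop 𝒞
  constructor
  · rw [subset_iff_specializes 𝒞 hcl]
    exact ((subset_iff_specializes 𝒞 hcl A B).mp h.1).map f.continuous
  · intro hc
    have := ((subset_iff_specializes 𝒞 hcl (f B) (f A)).mp hc).map f.symm.continuous
    simp only [Homeomorph.symm_apply_apply] at this
    exact h.2 ((subset_iff_specializes 𝒞 hcl B A).mpr this)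

/-- A homeomorphism `f` of a set `𝒞` of closed subsets of `X` with respect to the
Thurston topology maps any chain of length `n` below `A` to a chain of length `n`
below `f(A)`, and preserves the length: `length(A) = length(f(A))`. -/
theorem homeomorph_chainLength {X : Type*} [TopologicalSpace X]
    (𝒞 : Set (Set X)) (hcl : ∀ C ∈ 𝒞, IsClosed C)
    (f : @Homeomorph 𝒞 𝒞 (thurstonTop 𝒞) (thurstonTop 𝒞)) (A : 𝒞) :
    (∀ (n : ℕ) (c : Fin (n + 1) → 𝒞), IsChainBelow 𝒞 A n c →
      IsChainBelow 𝒞 (f A) n (fun i => f (c i))) ∧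
    chainLength 𝒞 A = chainLength 𝒞 (f A) := by
  letI := thurstonTop 𝒞
  have key : ∀ (g : @Homeomorph 𝒞 𝒞 (thurstonTop 𝒞) (thurstonTop 𝒞)) (B : 𝒞)
      (n : ℕ) (c : Fin (n + 1) → 𝒞), IsChainBelow 𝒞 B n c →
      IsChainBelow 𝒞 (g B) n (fun i => g (c i)) := by
    rintro g B n c ⟨hc0, hc⟩
    exact ⟨show g (c 0) = g B by rw [hc0], fun i => ssubset_map 𝒞 hcl g _ _ (hc i)⟩
  refine ⟨key f A, ?_⟩
  have hset : {n : ℕ | ∃ c : Fin (n + 1) → 𝒞, IsChainBelow 𝒞 A n c}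
      = {n : ℕ | ∃ c : Fin (n + 1) → 𝒞, IsChainBelow 𝒞 (f A) n c} := by
    ext n
    constructor
    · rintro ⟨c, hc⟩
      exact ⟨fun i => f (c i), key f A n c hc⟩
    · rintro ⟨c, hc⟩
      have := key f.symm (f A) n c hc
      rw [Homeomorph.symm_apply_apply] at this
      exact ⟨_, this⟩
  rw [chainLength, chainLength, hset]
end

section
/- Let X be a metric space, let (K_n) be a sequence of nonempty compact subsets of X, and let K and K' be nonempty compact subsets of X. Assume (1) the Hausdorff distance d_H(K_n, K) tends to 0 as n → ∞, and (2) for every open set V ⊆ X with V ∩ K' ≠ ∅ there exists N such that V ∩ K_n ≠ ∅ for all n ≥ N (i.e. K_n converges to K' in the Thurston topology). Then K' ⊆ K. -/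
open Metric Filter

/-- Let `(K n)` be a sequence of nonempty compact subsets of a metric space `X` and let
`L`, `L'` be nonempty compact subsets. If `d_H(K n, L) → 0` and `(K n)` converges to `L'`
in the Thurston topology (every open set meeting `L'` eventually meets `K n`),
then `L' ⊆ L`. -/
theorem thurston_limit_subset_hausdorff_limit {X : Type*} [MetricSpace X]
    (K : ℕ → Set X) (L L' : Set X)
    (hKc : ∀ n, IsCompact (K n)) (hKne : ∀ n, (K n).Nonempty)
    (hLc : IsCompact L) (hLne : L.Nonempty)
    (hL'c : IsCompact L') (hL'ne : L'.Nonempty)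
    (h1 : Tendsto (fun n => hausdorffDist (K n) L) atTop (nhds 0))
    (h2 : ∀ V : Set X, IsOpen V → (V ∩ L').Nonempty →
      ∃ N : ℕ, ∀ n ≥ N, (V ∩ K n).Nonempty) :
    L' ⊆ L := by
  intro x hx
  by_contra hxL
  have hd : 0 < infDist x L := (hLc.isClosed.notMem_iff_infDist_pos hLne).mp hxL
  set d := infDist x L with hdd
  -- eventually hausdorffDist < d/2
  have hev : ∀ᶠ n in atTop, hausdorffDist (K n) L < d / 2 := by
    have := h1.eventually (gt_mem_nhds (by linarith : (0:ℝ) < d / 2))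
    exact this
  obtain ⟨N1, hN1⟩ := eventually_atTop.mp hev
  obtain ⟨N2, hN2⟩ := h2 (ball x (d/2)) isOpen_ball ⟨x, mem_ball_self (by linarith), hx⟩
  obtain ⟨y, hyb, hyK⟩ := hN2 (max N1 N2) (le_max_right _ _)
  have hfin : EMetric.hausdorffEdist (K (max N1 N2)) L ≠ ⊤ :=
    hausdorffEdist_ne_top_of_nonempty_of_bounded (hKne _) hLne
      ((hKc _).isBounded) hLc.isBounded
  have h3 : infDist y L ≤ hausdorffDist (K (max N1 N2)) L :=
    infDist_le_hausdorffDist_of_mem hyK hfin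
  have h4 : infDist y L < d / 2 := lt_of_le_of_lt h3 (hN1 _ (le_max_left _ _))
  obtain ⟨z, hz, hzd⟩ := (infDist_lt_iff hLne).mp h4
  have : dist x z < d := by
    have := dist_triangle x y z
    have hxy : dist x y < d / 2 := mem_ball'.mp hyb
    linarith
  have h5 : infDist x L ≤ dist x z := infDist_le_dist_of_mem hz
  linarith
end
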